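/- arXiv:1509.01823 — 3 statements merged into one kernel-verified Lean document; each statement's English description precedes it below -/
import Mathlib

section
/- Every r-graph (an r-regular graph G such that |∂S| ≥ r for every vertex subset S of odd cardinality) has a perfect matching. -/
open Finset Filter Topology

/-- Edges of a multigraph (given by endpoint maps `fst`, `snd`) with exactly
one endpoint in `S`, i.e. the edge cut `∂S`. -/
def edgeBoundary {V E : Type*} [Fintype E] [DecidableEq V] (fst snd : E → V)
    (S : Finset V) : Finset E :=
  univ.filter (fun e => ¬ (fst e ∈ S ↔ snd e ∈ S))

/-- A perfect matching of the multigraph: every vertex lies in exactly one edge of `M`. -/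
def IsPerfectMatching {V E : Type*} [DecidableEq V] (fst snd : E → V)
    (M : Finset E) : Prop :=
  ∀ v : V, (M.filter (fun e => fst e = v ∨ snd e = v)).card = 1

/-- An `r`-graph: `r`-regular and every odd vertex set has edge boundary of size at least `r`. -/
def IsRGraph {V E : Type*} [Fintype V] [Fintype E] [DecidableEq V] (fst snd : E → V)
    (r : ℕ) : Prop :=
  (∀ v : V, (univ.filter (fun e => fst e = v)).card
      + (univ.filter (fun e => snd e = v)).card = r) ∧
  (∀ S : Finset V, Odd S.card → r ≤ (edgeBoundary fst snd S).card)

/-- A fractional 1-factor. -/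
def IsFracOneFactor {V E : Type*} [Fintype V] [Fintype E] [DecidableEq V]
    (fst snd : E → V) (w : E → ℝ) : Prop :=
  (∀ e, 0 ≤ w e ∧ w e ≤ 1) ∧
  (∀ v : V, ∑ e ∈ edgeBoundary fst snd {v}, w e = 1) ∧
  (∀ S : Finset V, Odd S.card → 1 ≤ ∑ e ∈ edgeBoundary fst snd S, w e)

/-- Characteristic vector of a set of edges. -/
def chi {E : Type*} [DecidableEq E] (M : Finset E) : E → ℝ :=
  fun e => if e ∈ M then 1 else 0


open Finset

set_option linter.unusedSectionVars false
open scoped Classical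

noncomputable section TutteAux

variable {V : Type*} [Fintype V] [DecidableEq V]

/-- One step of adjacency inside the vertex set `A`. -/
def TStep (G : V → V → Prop) (A : Finset V) (x y : V) : Prop := x ∈ A ∧ y ∈ A ∧ G x y

/-- Connectivity inside `A`. -/
def TConn (G : V → V → Prop) (A : Finset V) : V → V → Prop :=
  Relation.ReflTransGen (TStep G A)

/-- The connected component of `v` inside `A`. -/
noncomputable def tcmp (G : V → V → Prop) (A : Finset V) (v : V) : Finset V :=
  A.filter (fun y => TConn G A v y)

noncomputable def tcomps (G : V → V → Prop) (A : Finset V) : Finset (Finset V) :=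
  A.image (tcmp G A)

noncomputable def toddC (G : V → V → Prop) (A : Finset V) : Finset (Finset V) :=
  (tcomps G A).filter (fun c => Odd c.card)

noncomputable def toc (G : V → V → Prop) (A : Finset V) : ℕ := (toddC G A).card

variable {G : V → V → Prop} {A B C : Finset V} {x y v : V}

lemma TConn.mono (hAB : A ⊆ B) (h : TConn G A x y) : TConn G B x y := by
  induction h with
  | refl => exact Relation.ReflTransGen.refl
  | tail _ h ih => exact ih.tail ⟨hAB h.1, hAB h.2.1, h.2.2⟩

lemma TConn.symm (hs : Symmetric G) (h : TConn G A x y) : TConn G A y x :=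
  by
  induction h with
  | refl => exact Relation.ReflTransGen.refl
  | tail _ h ih => exact Relation.ReflTransGen.head ⟨h.2.1, h.1, hs h.2.2⟩ ih

lemma TConn.trans {z : V} (h : TConn G A x y) (h' : TConn G A y z) : TConn G A x z :=
  Relation.ReflTransGen.trans h h'

lemma mem_tcmp_self (hv : v ∈ A) : v ∈ tcmp G A v := by
  exact mem_filter.mpr ⟨hv, Relation.ReflTransGen.refl⟩

lemma tcmp_subset : tcmp G A v ⊆ A := Finset.filter_subset _ _

lemma mem_tcmp_iff : y ∈ tcmp G A v ↔ y ∈ A ∧ TConn G A v y := by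
  simp [tcmp]

lemma TConn.right_mem (hx : x ∈ A) (h : TConn G A x y) : y ∈ A := by
  induction h with
  | refl => exact hx
  | tail _ h _ => exact h.2.1

lemma tcmp_eq_of_mem (hs : Symmetric G) (hy : y ∈ tcmp G A x) :
    tcmp G A y = tcmp G A x := by
  rw [mem_tcmp_iff] at hy
  ext z
  simp only [mem_tcmp_iff]
  exact ⟨fun hz => ⟨hz.1, hy.2.trans hz.2⟩, fun hz => ⟨hz.1, (hy.2.symm hs).trans hz.2⟩⟩

lemma tcmp_mem_tcomps (hv : v ∈ A) : tcmp G A v ∈ tcomps G A :=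
  Finset.mem_image_of_mem _ hv

lemma tcomps_nonempty_mem (hc : C ∈ tcomps G A) : C.Nonempty := by
  obtain ⟨v, hv, rfl⟩ := Finset.mem_image.mp hc
  exact ⟨v, mem_tcmp_self hv⟩

lemma tcomps_subset (hc : C ∈ tcomps G A) : C ⊆ A := by
  obtain ⟨v, hv, rfl⟩ := Finset.mem_image.mp hc
  exact tcmp_subset

lemma tcmp_eq_of_mem_comps (hs : Symmetric G) (hc : C ∈ tcomps G A) (hx : x ∈ C) :
    tcmp G A x = C := by
  obtain ⟨v, hv, rfl⟩ := Finset.mem_image.mp hc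
  exact tcmp_eq_of_mem hs hx

/-- components are pairwise disjoint -/
lemma tcomps_disjoint (hs : Symmetric G) (hc : C ∈ tcomps G A) {D : Finset V}
    (hd : D ∈ tcomps G A) (hne : C ≠ D) : Disjoint C D := by
  rw [Finset.disjoint_left]
  intro a haC haD
  exact hne ((tcmp_eq_of_mem_comps hs hc haC).symm.trans (tcmp_eq_of_mem_comps hs hd haD))

/-- no edges leave a component (within `A`) -/
lemma not_adj_of_comp (hs : Symmetric G) (hc : C ∈ tcomps G A) (hx : x ∈ C) (hy : y ∈ A)
    (hyC : y ∉ C) : ¬ G x y := by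
  intro hxy
  apply hyC
  rw [← tcmp_eq_of_mem_comps hs hc hx, mem_tcmp_iff]
  exact ⟨hy, Relation.ReflTransGen.single ⟨tcomps_subset hc hx, hy, hxy⟩⟩



lemma tcomps_biUnion (hs : Symmetric G) : (tcomps G A).biUnion id = A := by
  apply Finset.Subset.antisymm
  · intro x hx
    simp only [Finset.mem_biUnion, id] at hx
    obtain ⟨c, hc, hxc⟩ := hx
    exact tcomps_subset hc hxc
  · intro x hx
    exact Finset.mem_biUnion.mpr ⟨tcmp G A x, tcmp_mem_tcomps hx, mem_tcmp_self hx⟩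

lemma sum_tcomps_card (hs : Symmetric G) : ∑ c ∈ tcomps G A, c.card = A.card := by
  conv_rhs => rw [← tcomps_biUnion (G := G) (A := A) hs]
  rw [Finset.card_biUnion]
  · simp
  · intro c hc d hd hcd
    exact tcomps_disjoint hs hc hd hcd

/-- parity: the number of odd components has the same parity as `|A|`. -/
lemma toc_parity (hs : Symmetric G) : toc G A % 2 = A.card % 2 := by
  conv_rhs => rw [← sum_tcomps_card (G := G) (A := A) hs]
  rw [Finset.sum_nat_mod]
  have : ∑ c ∈ tcomps G A, c.card % 2 = ∑ c ∈ toddC G A, 1 := by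
    rw [toddC, Finset.sum_filter]
    apply Finset.sum_congr rfl
    intro c _
    rcases Nat.even_or_odd c.card with h | h
    · simp [Nat.not_odd_iff_even.mpr h, Nat.even_iff.mp h]
    · simp [h, Nat.odd_iff.mp h]
  rw [this, Finset.sum_const, smul_eq_mul, mul_one, toc]

/-- A path in `B ∪ C` starting in `B` stays in `B`, if there are no `B`-`C` edges. -/
lemma tconn_stay (hd : Disjoint B C) (hsep : ∀ x ∈ B, ∀ y ∈ C, ¬ G x y)
    (hx : x ∈ B) (h : TConn G (B ∪ C) x y) : y ∈ B ∧ TConn G B x y := by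
  induction h with
  | refl => exact ⟨hx, Relation.ReflTransGen.refl⟩
  | tail _ h ih =>
    rename_i u z _
    obtain ⟨huB, hconn⟩ := ih
    have hzB : z ∈ B := by
      rcases Finset.mem_union.mp h.2.1 with h' | h'
      · exact h'
      · exact absurd h.2.2 (hsep u huB z h')
    exact ⟨hzB, hconn.tail ⟨huB, hzB, h.2.2⟩⟩

lemma tcmp_union_left (hd : Disjoint B C) (hsep : ∀ x ∈ B, ∀ y ∈ C, ¬ G x y)
    (hx : x ∈ B) : tcmp G (B ∪ C) x = tcmp G B x := by
  ext z
  simp only [mem_tcmp_iff, Finset.mem_union]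
  constructor
  · intro ⟨_, hconn⟩
    have := tconn_stay hd hsep hx hconn
    exact ⟨this.1, this.2⟩
  · intro ⟨hz, hconn⟩
    exact ⟨Or.inl hz, hconn.mono (Finset.subset_union_left)⟩

lemma tcomps_union (hs : Symmetric G) (hd : Disjoint B C)
    (hsep : ∀ x ∈ B, ∀ y ∈ C, ¬ G x y) :
    tcomps G (B ∪ C) = tcomps G B ∪ tcomps G C := by
  have hsep' : ∀ x ∈ C, ∀ y ∈ B, ¬ G x y := fun x hx y hy h => hsep y hy x hx (hs h)
  have hcomm : (C : Finset V) ∪ B = B ∪ C := Finset.union_comm C B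
  ext c
  simp only [tcomps, Finset.mem_image, Finset.mem_union]
  constructor
  · rintro ⟨v, hv, rfl⟩
    rcases hv with h | h
    · exact Or.inl ⟨v, h, (tcmp_union_left hd hsep h).symm⟩
    · refine Or.inr ⟨v, h, ?_⟩
      rw [← tcmp_union_left hd.symm hsep' h, hcomm]
  · rintro (⟨v, hv, rfl⟩ | ⟨v, hv, rfl⟩)
    · exact ⟨v, Or.inl hv, tcmp_union_left hd hsep hv⟩
    · refine ⟨v, Or.inr hv, ?_⟩
      rw [← hcomm]
      exact tcmp_union_left hd.symm hsep' hv

lemma tcomps_disjoint_sets (hd : Disjoint B C) :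
    Disjoint (tcomps G B) (tcomps G C) := by
  rw [Finset.disjoint_left]
  intro c hcB hcC
  obtain ⟨v, hv⟩ := tcomps_nonempty_mem hcB
  exact Finset.disjoint_left.mp hd (tcomps_subset hcB hv) (tcomps_subset hcC hv)

lemma toc_union (hs : Symmetric G) (hd : Disjoint B C)
    (hsep : ∀ x ∈ B, ∀ y ∈ C, ¬ G x y) :
    toc G (B ∪ C) = toc G B + toc G C := by
  unfold toc toddC
  rw [tcomps_union hs hd hsep, Finset.filter_union, Finset.card_union_of_disjoint]
  exact Finset.disjoint_filter_filter (tcomps_disjoint_sets hd)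

/-- a path within `A` between elements of a component `c` stays in `c`;
hence a component is connected as a graph on itself. -/
lemma tconn_in_comp (hs : Symmetric G) (hc : C ∈ tcomps G A) (hx : x ∈ C)
    (h : TConn G A x y) : y ∈ C ∧ TConn G C x y := by
  induction h with
  | refl => exact ⟨hx, Relation.ReflTransGen.refl⟩
  | tail _ h ih =>
    rename_i u z _
    obtain ⟨huC, hconn⟩ := ih
    have hzC : z ∈ C := by
      rw [← tcmp_eq_of_mem_comps hs hc huC, mem_tcmp_iff]
      exact ⟨h.2.1, Relation.ReflTransGen.single ⟨tcomps_subset hc huC, h.2.1, h.2.2⟩⟩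
    exact ⟨hzC, hconn.tail ⟨huC, hzC, h.2.2⟩⟩

lemma tcomps_self (hs : Symmetric G) (hc : C ∈ tcomps G A) :
    tcomps G C = {C} := by
  obtain ⟨w, hw⟩ := tcomps_nonempty_mem hc
  have key : ∀ x ∈ C, tcmp G C x = C := by
    intro x hx
    apply Finset.Subset.antisymm tcmp_subset
    intro z hz
    have h1 : TConn G A x z := by
      have hx' : TConn G A w x := by
        have := tcmp_eq_of_mem_comps hs hc hw
        rw [← this, mem_tcmp_iff] at hx
        exact hx.2
      have hz' : TConn G A w z := by
        have := tcmp_eq_of_mem_comps hs hc hw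
        rw [← this, mem_tcmp_iff] at hz
        exact hz.2
      exact (hx'.symm hs).trans hz'
    rw [mem_tcmp_iff]
    exact ⟨hz, (tconn_in_comp hs hc hx h1).2⟩
  ext c
  simp only [tcomps, Finset.mem_image, Finset.mem_singleton]
  constructor
  · rintro ⟨v, hv, rfl⟩; exact key v hv
  · rintro rfl; exact ⟨w, hw, key w hw⟩

lemma toc_self (hs : Symmetric G) (hc : C ∈ tcomps G A) :
    toc G C = if Odd C.card then 1 else 0 := by
  unfold toc toddC
  rw [tcomps_self hs hc]
  by_cases h : Odd C.card <;> simp [Finset.filter_singleton, h]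

/-- extension: a component of `B` with no edges into `B' \ B` is a component of `B'`. -/
lemma tcomps_extend (hs : Symmetric G) (hBB : B ⊆ A) (hc : C ∈ tcomps G B)
    (hsep : ∀ x ∈ C, ∀ y ∈ A, y ∉ B → ¬ G x y) : C ∈ tcomps G A := by
  obtain ⟨v, hv⟩ := tcomps_nonempty_mem hc
  have key : tcmp G A v = C := by
    apply Finset.Subset.antisymm
    · intro z hz
      rw [mem_tcmp_iff] at hz
      -- path in A from v stays in C
      have : ∀ y, TConn G A v y → y ∈ C := by
        intro y hy
        induction hy with
        | refl => exact hv
        | tail _ h ih =>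
          rename_i u z' _
          have huC := ih
          have hz'B : z' ∈ B := by
            by_contra hz'B
            exact hsep u huC z' h.2.1 hz'B h.2.2
          rw [← tcmp_eq_of_mem_comps hs hc huC, mem_tcmp_iff]
          exact ⟨hz'B, Relation.ReflTransGen.single ⟨tcomps_subset hc huC, hz'B, h.2.2⟩⟩
      exact this z hz.2
    · intro z hz
      rw [← tcmp_eq_of_mem_comps hs hc hv, mem_tcmp_iff] at hz
      rw [mem_tcmp_iff]
      exact ⟨hBB hz.1, hz.2.mono hBB⟩
  rw [← key]
  exact tcmp_mem_tcomps (hBB (tcomps_subset hc hv))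

/-- A perfect matching (as an involution) on the vertex set `A`. -/
def PMon (G : V → V → Prop) (A : Finset V) (m : V → V) : Prop :=
  ∀ v ∈ A, m v ∈ A ∧ G v (m v) ∧ m (m v) = v

def TutteCond (G : V → V → Prop) (A : Finset V) : Prop :=
  ∀ S ⊆ A, toc G (A \ S) ≤ S.card

theorem tutte_main (hs : Symmetric G) :
    ∀ n (A : Finset V), A.card ≤ n → TutteCond G A → ∃ m, PMon G A m := by
  intro n
  induction n with
  | zero =>
    intro A hA _
    refine ⟨id, fun v hv => absurd (Finset.card_eq_zero.mp (Nat.le_zero.mp hA) ▸ hv) ?_⟩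
    simp
  | succ n IH =>
    intro A hA hT
    rcases Finset.eq_empty_or_nonempty A with rfl | ⟨v₀, hv₀⟩
    · exact ⟨id, fun v hv => absurd hv (by simp)⟩
    -- no odd components of A itself, |A| even
    have hA0 : toc G A = 0 := by
      have := hT ∅ (Finset.empty_subset A)
      simpa using this
    have hAeven : A.card % 2 = 0 := by
      rw [← toc_parity hs, hA0]
    -- the family of tight nonempty sets
    set 𝒮 : Finset (Finset V) :=
      A.powerset.filter (fun S => S.Nonempty ∧ toc G (A \ S) = S.card) with h𝒮
    have h𝒮ne : 𝒮.Nonempty := by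
      refine ⟨{v₀}, ?_⟩
      rw [h𝒮, Finset.mem_filter, Finset.mem_powerset]
      refine ⟨Finset.singleton_subset_iff.mpr hv₀, Finset.singleton_nonempty v₀, ?_⟩
      have hle : toc G (A \ {v₀}) ≤ 1 := by
        simpa using hT {v₀} (Finset.singleton_subset_iff.mpr hv₀)
      have hpar : toc G (A \ {v₀}) % 2 = 1 := by
        rw [toc_parity hs, Finset.sdiff_singleton_eq_erase, Finset.card_erase_of_mem hv₀]
        have h1 : 1 ≤ A.card := Finset.card_pos.mpr ⟨v₀, hv₀⟩
        omega
      simp only [Finset.card_singleton]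
      omega
    obtain ⟨S, hS𝒮, hSmax⟩ := Finset.exists_max_image 𝒮 Finset.card h𝒮ne
    rw [h𝒮, Finset.mem_filter, Finset.mem_powerset] at hS𝒮
    obtain ⟨hSA, hSne, hStight⟩ := hS𝒮
    have hScard : 1 ≤ S.card := Finset.card_pos.mpr hSne
    set K := tcomps G (A \ S) with hK
    -- decomposition of A \ S along a component
    have hocR : ∀ c ∈ K, toc G (A \ S) = (if Odd c.card then 1 else 0) + toc G ((A \ S) \ c) := by
      intro c hc
      have hcu : A \ S = c ∪ ((A \ S) \ c) :=
        (Finset.union_sdiff_of_subset (tcomps_subset hc)).symm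
      have hsepc : ∀ x ∈ c, ∀ y ∈ (A \ S) \ c, ¬ G x y := fun x hx y hy =>
        not_adj_of_comp hs hc hx (Finset.mem_sdiff.mp hy).1 (Finset.mem_sdiff.mp hy).2
      conv_lhs => rw [hcu]
      rw [toc_union hs Finset.disjoint_sdiff hsepc, toc_self hs hc]
    -- the key consequence of maximality
    have key : ∀ c ∈ K, ∀ u ∈ c, ∀ T ⊆ c \ {u},
        toc G (c \ insert u T) + toc G ((A \ S) \ c) ≤ S.card + T.card := by
      intro c hc u hu T hTc
      set W := insert u T with hW
      have hWc : W ⊆ c := by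
        intro x hx
        rcases Finset.mem_insert.mp hx with rfl | hx
        · exact hu
        · exact (Finset.mem_sdiff.mp (hTc hx)).1
      have hcAS : c ⊆ A \ S := tcomps_subset hc
      have hWAS : W ⊆ A \ S := hWc.trans hcAS
      have huT : u ∉ T := fun h => (Finset.mem_sdiff.mp (hTc h)).2 (Finset.mem_singleton_self u)
      set S' := S ∪ W with hS'
      have hS'A : S' ⊆ A := Finset.union_subset hSA (hWAS.trans (Finset.sdiff_subset))
      have hdisjSW : Disjoint S W := by
        rw [Finset.disjoint_right]
        intro x hx
        exact (Finset.mem_sdiff.mp (hWAS hx)).2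
      have hS'card : S'.card = S.card + T.card + 1 := by
        rw [hS', Finset.card_union_of_disjoint hdisjSW, hW, Finset.card_insert_of_notMem huT]
        omega
      have hsplit : A \ S' = (c \ W) ∪ ((A \ S) \ c) := by
        ext x
        simp only [hS', Finset.mem_sdiff, Finset.mem_union, not_or]
        constructor
        · rintro ⟨hxA, hxS, hxW⟩
          by_cases hxc : x ∈ c
          · exact Or.inl ⟨hxc, hxW⟩
          · exact Or.inr ⟨⟨hxA, hxS⟩, hxc⟩
        · rintro (⟨hxc, hxW⟩ | ⟨⟨hxA, hxS⟩, hxc⟩)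
          · have h' := Finset.mem_sdiff.mp (hcAS hxc)
            exact ⟨h'.1, h'.2, hxW⟩
          · exact ⟨hxA, hxS, fun h => hxc (hWc h)⟩
      have hsepc : ∀ x ∈ c \ W, ∀ y ∈ (A \ S) \ c, ¬ G x y := fun x hx y hy =>
        not_adj_of_comp hs hc (Finset.mem_sdiff.mp hx).1 (Finset.mem_sdiff.mp hy).1
          (Finset.mem_sdiff.mp hy).2
      have hdisj2 : Disjoint (c \ W) ((A \ S) \ c) :=
        Finset.disjoint_of_subset_left (Finset.sdiff_subset) Finset.disjoint_sdiff
      have htoc' : toc G (A \ S') = toc G (c \ W) + toc G ((A \ S) \ c) := by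
        rw [hsplit, toc_union hs hdisj2 hsepc]
      have hle : toc G (A \ S') ≤ S'.card := hT S' hS'A
      -- equality would contradict maximality
      have hne : toc G (A \ S') ≠ S'.card := by
        intro heq
        have hS'𝒮 : S' ∈ 𝒮 := by
          rw [h𝒮, Finset.mem_filter, Finset.mem_powerset]
          exact ⟨hS'A, ⟨u, Finset.mem_union_right _ (Finset.mem_insert_self u T)⟩, heq⟩
        have := hSmax S' hS'𝒮
        omega
      omega
    -- all components are odd
    have hKodd : ∀ c ∈ K, Odd c.card := by
      intro c hc
      by_contra hodd
      obtain ⟨u, hu⟩ := tcomps_nonempty_mem hc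
      have hkey := key c hc u hu ∅ (Finset.empty_subset _)
      have hocR' := hocR c hc
      rw [if_neg hodd] at hocR'
      have hpar : toc G (c \ insert u ∅) % 2 = 1 := by
        rw [toc_parity hs]
        have hcard : (c \ insert u ∅).card = c.card - 1 := by
          rw [show insert u (∅ : Finset V) = {u} from rfl, Finset.sdiff_singleton_eq_erase,
            Finset.card_erase_of_mem hu]
        rw [hcard]
        have h1 : 1 ≤ c.card := Finset.card_pos.mpr ⟨u, hu⟩
        rw [Nat.not_odd_iff_even, Nat.even_iff] at hodd
        omega
      simp only [Finset.card_empty] at hkey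
      omega
    have hR1 : ∀ c ∈ K, 1 + toc G ((A \ S) \ c) = S.card := by
      intro c hc
      have := hocR c hc
      rw [if_pos (hKodd c hc), hStight] at this
      omega
    -- each component minus a vertex satisfies the Tutte condition; get matchings by IH
    have hFC : ∀ c ∈ K, ∀ u ∈ c, ∃ m, PMon G (c \ {u}) m := by
      intro c hc u hu
      have hcodd := hKodd c hc
      have hcA : c ⊆ A \ S := tcomps_subset hc
      apply IH
      · have h1 : (c \ {u}).card = c.card - 1 := by
          rw [Finset.sdiff_singleton_eq_erase, Finset.card_erase_of_mem hu]
        have h2 : c.card ≤ A.card - S.card := by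
          have := Finset.card_le_card hcA
          rw [Finset.card_sdiff_of_subset hSA] at this
          exact this
        have h3 := Finset.card_le_card hSA
        omega
      · intro T hTc
        have hTc' : T ⊆ c \ {u} := hTc
        have hsdiff : (c \ {u}) \ T = c \ insert u T := by
          ext x
          simp only [Finset.mem_sdiff, Finset.mem_singleton, Finset.mem_insert]
          tauto
        rw [hsdiff]
        have hkey := key c hc u hu T hTc'
        have hR := hR1 c hc
        -- parity of toc G (c \ insert u T)
        have huT : u ∉ T := fun h => (Finset.mem_sdiff.mp (hTc' h)).2 (Finset.mem_singleton_self u)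
        have hWc : insert u T ⊆ c := by
          intro x hx
          rcases Finset.mem_insert.mp hx with rfl | hx
          · exact hu
          · exact (Finset.mem_sdiff.mp (hTc' hx)).1
        have hcardW : (c \ insert u T).card = c.card - (T.card + 1) := by
          rw [Finset.card_sdiff_of_subset hWc, Finset.card_insert_of_notMem huT]
        have hpar : toc G (c \ insert u T) % 2 = (c.card - (T.card + 1)) % 2 := by
          rw [toc_parity hs, hcardW]
        have hTW : T.card + 1 ≤ c.card := by
          have := Finset.card_le_card hWc
          rw [Finset.card_insert_of_notMem huT] at this
          exact this
        have hcodd' := Nat.odd_iff.mp hcodd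
        omega
    -- K has exactly |S| components, all odd
    have hKcard : K.card = S.card := by
      have h1 : toddC G (A \ S) = K := Finset.filter_true_of_mem (fun c hc => hKodd c hc)
      have h2 : toc G (A \ S) = (toddC G (A \ S)).card := rfl
      rw [h1] at h2
      rw [← h2, hStight]
    -- neighbourhoods in S
    set NS : Finset V → Finset V := fun c => S.filter (fun s => ∃ x ∈ c, G x s) with hNS
    -- Hall's condition
    have hHall : ∀ s : Finset {c // c ∈ K}, s.card ≤ (s.biUnion (fun c => NS c.1)).card := by
      intro s
      set N := s.biUnion (fun c => NS c.1) with hNdef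
      have hNsubS : N ⊆ S := by
        intro x hx
        obtain ⟨c, _, hxc⟩ := Finset.mem_biUnion.mp hx
        exact Finset.filter_subset _ _ hxc
      have hsub : ∀ c ∈ s, c.1 ∈ toddC G (A \ N) := by
        intro c hcs
        rw [toddC, Finset.mem_filter]
        refine ⟨?_, hKodd c.1 c.2⟩
        refine tcomps_extend hs (Finset.sdiff_subset_sdiff (le_refl A) hNsubS) c.2 ?_
        intro x hx y hy hyB hadj
        have hyS : y ∈ S := by
          by_contra hyS
          exact hyB (Finset.mem_sdiff.mpr ⟨(Finset.mem_sdiff.mp hy).1, hyS⟩)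
        have hy1 : y ∈ NS c.1 := Finset.mem_filter.mpr ⟨hyS, ⟨x, hx, hadj⟩⟩
        exact (Finset.mem_sdiff.mp hy).2 (Finset.mem_biUnion.mpr ⟨c, hcs, hy1⟩)
      have h1 : s.image Subtype.val ⊆ toddC G (A \ N) := by
        intro c hc
        obtain ⟨d, hd, rfl⟩ := Finset.mem_image.mp hc
        exact hsub d hd
      have h2 : (s.image Subtype.val).card = s.card :=
        Finset.card_image_of_injective _ Subtype.val_injective
      have h3 := Finset.card_le_card h1
      have h4 : toc G (A \ N) ≤ N.card := hT N (hNsubS.trans hSA)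
      have h5 : toc G (A \ N) = (toddC G (A \ N)).card := rfl
      omega
    obtain ⟨f, hfinj, hfmem⟩ :=
      (Finset.all_card_le_biUnion_card_iff_exists_injective (fun c : {c // c ∈ K} => NS c.1)).mp
        hHall
    have hfS : ∀ c, f c ∈ S := fun c => Finset.filter_subset _ _ (hfmem c)
    have himg : (Finset.univ.image f) = S := by
      apply Finset.eq_of_subset_of_card_le
      · intro x hx
        obtain ⟨c, _, rfl⟩ := Finset.mem_image.mp hx
        exact hfS c
      · rw [Finset.card_image_of_injective _ hfinj, Finset.card_univ, Fintype.card_coe, hKcard]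
    have hex : ∀ c : {c // c ∈ K}, ∃ x, x ∈ c.1 ∧ G x (f c) := by
      intro c
      obtain ⟨x, hx, hadj⟩ := (Finset.mem_filter.mp (hfmem c)).2
      exact ⟨x, hx, hadj⟩
    choose uu huu hadj using hex
    have hmc : ∀ c : {c // c ∈ K}, ∃ m, PMon G (c.1 \ {uu c}) m :=
      fun c => hFC c.1 c.2 (uu c) (huu c)
    choose mm hmm using hmc
    have hcomp_sub : ∀ c : {c // c ∈ K}, c.1 ⊆ A \ S := fun c => tcomps_subset c.2
    have hdisjK : ∀ (c d : {c // c ∈ K}), ∀ v, v ∈ c.1 → v ∈ d.1 → c = d := by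
      intro c d v hvc hvd
      by_contra hne
      exact Finset.disjoint_left.mp
        (tcomps_disjoint hs c.2 d.2 (fun h => hne (Subtype.ext h))) hvc hvd
    set M : V → V := fun v =>
      if hv : ∃ c : {c // c ∈ K}, v ∈ c.1 then
        (if v = uu hv.choose then f hv.choose else mm hv.choose v)
      else if hw : ∃ c : {c // c ∈ K}, f c = v then uu hw.choose else v with hM
    have hMcomp : ∀ (c : {c // c ∈ K}) (v : V), v ∈ c.1 →
        M v = if v = uu c then f c else mm c v := by
      intro c v hvc
      have hvc' : ∃ d : {c // c ∈ K}, v ∈ d.1 := ⟨c, hvc⟩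
      have heq : hvc'.choose = c := hdisjK _ _ _ hvc'.choose_spec hvc
      rw [hM]
      simp only [dif_pos hvc']
      rw [heq]
    have hMS : ∀ c : {c // c ∈ K}, M (f c) = uu c := by
      intro c
      have hnc : ¬ ∃ d : {c // c ∈ K}, f c ∈ d.1 := by
        rintro ⟨d, hd⟩
        exact (Finset.mem_sdiff.mp (hcomp_sub d hd)).2 (hfS c)
      have hwex : ∃ d : {c // c ∈ K}, f d = f c := ⟨c, rfl⟩
      have heq : hwex.choose = c := hfinj hwex.choose_spec
      rw [hM]
      simp only [dif_neg hnc, dif_pos hwex]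
      rw [heq]
    refine ⟨M, ?_⟩
    intro v hv0
    by_cases hvS : v ∈ S
    · obtain ⟨c, -, hfc⟩ := Finset.mem_image.mp (show v ∈ Finset.univ.image f by rw [himg]; exact hvS)
      have huuA : uu c ∈ A := (Finset.mem_sdiff.mp (hcomp_sub c (huu c))).1
      refine ⟨?_, ?_, ?_⟩
      · rw [← hfc, hMS]; exact huuA
      · rw [← hfc, hMS]; exact hs (hadj c)
      · rw [← hfc, hMS, hMcomp c (uu c) (huu c), if_pos rfl, hfc]
    · have hvAS : v ∈ A \ S := Finset.mem_sdiff.mpr ⟨hv0, hvS⟩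
      have hvc : ∃ c : {c // c ∈ K}, v ∈ c.1 :=
        ⟨⟨tcmp G (A \ S) v, tcmp_mem_tcomps hvAS⟩, mem_tcmp_self hvAS⟩
      obtain ⟨c, hc⟩ := hvc
      rw [hMcomp c v hc]
      by_cases hvu : v = uu c
      · rw [if_pos hvu]
        refine ⟨hSA (hfS c), ?_, ?_⟩
        · rw [hvu]; exact hadj c
        · rw [hMS, hvu]
      · rw [if_neg hvu]
        have hvmem : v ∈ c.1 \ {uu c} :=
          Finset.mem_sdiff.mpr ⟨hc, by simp [hvu]⟩
        obtain ⟨h1, h2, h3⟩ := hmm c v hvmem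
        have hm1 : mm c v ∈ c.1 := (Finset.mem_sdiff.mp h1).1
        have hm2 : mm c v ≠ uu c := by
          have := (Finset.mem_sdiff.mp h1).2
          simpa using this
        refine ⟨(Finset.mem_sdiff.mp (hcomp_sub c hm1)).1, h2, ?_⟩
        rw [hMcomp c (mm c v) hm1, if_neg hm2, h3]

end TutteAux

/-- Every `r`-graph has a perfect matching. -/
theorem rGraph_has_perfect_matching {V E : Type*} [Fintype V] [Fintype E] [DecidableEq V]
    (r : ℕ) (hr : 1 ≤ r) (fst snd : E → V) (hG : IsRGraph fst snd r) :
    ∃ M : Finset E, IsPerfectMatching fst snd M := by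
  classical
  set G : V → V → Prop := fun v w => v ≠ w ∧ ∃ e : E, s(fst e, snd e) = s(v, w) with hGdef
  have hsymm : Symmetric G := by
    rintro v w ⟨hne, e, he⟩
    exact ⟨hne.symm, e, he.trans (Sym2.eq_swap)⟩
  -- the Tutte condition follows from the r-graph property by counting
  have hcond : TutteCond G (univ : Finset V) := by
    intro S hSu
    set B := (univ : Finset V) \ S with hB
    set 𝒞 := toddC G B with h𝒞
    have hstruct : ∀ c ∈ 𝒞, ∀ e ∈ edgeBoundary fst snd c,
        (fst e ∈ c ∧ snd e ∈ S) ∨ (snd e ∈ c ∧ fst e ∈ S) := by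
      intro c hc e he
      have hcK : c ∈ tcomps G B := (Finset.mem_filter.mp hc).1
      rw [edgeBoundary, Finset.mem_filter] at he
      have hne2 := he.2
      by_cases h1 : fst e ∈ c
      · have h2 : snd e ∉ c := fun h => hne2 (iff_of_true h1 h)
        left
        refine ⟨h1, ?_⟩
        by_contra hsS
        have hsB : snd e ∈ B := Finset.mem_sdiff.mpr ⟨Finset.mem_univ _, hsS⟩
        have hnev : fst e ≠ snd e := fun h => h2 (h ▸ h1)
        exact not_adj_of_comp hsymm hcK h1 hsB h2 ⟨hnev, e, rfl⟩
      · have h2 : snd e ∈ c := by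
          by_contra h2
          exact hne2 (iff_of_false h1 h2)
        right
        refine ⟨h2, ?_⟩
        by_contra hfS
        have hfB : fst e ∈ B := Finset.mem_sdiff.mpr ⟨Finset.mem_univ _, hfS⟩
        have hnev : snd e ≠ fst e := fun h => h1 (h ▸ h2)
        exact not_adj_of_comp hsymm hcK h2 hfB h1 ⟨hnev, e, Sym2.eq_swap⟩
    have hdisj : ∀ c ∈ 𝒞, ∀ d ∈ 𝒞, c ≠ d →
        Disjoint (edgeBoundary fst snd c) (edgeBoundary fst snd d) := by
      intro c hc d hd hcd
      rw [Finset.disjoint_left]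
      intro e hec hed
      have hcK : c ∈ tcomps G B := (Finset.mem_filter.mp hc).1
      have hdK : d ∈ tcomps G B := (Finset.mem_filter.mp hd).1
      have hCd : Disjoint c d := tcomps_disjoint hsymm hcK hdK hcd
      have hcS : ∀ x ∈ c, x ∉ S := fun x hx hxS =>
        (Finset.mem_sdiff.mp (tcomps_subset hcK hx)).2 hxS
      have hdS : ∀ x ∈ d, x ∉ S := fun x hx hxS =>
        (Finset.mem_sdiff.mp (tcomps_subset hdK hx)).2 hxS
      rcases hstruct c hc e hec with ⟨h1, h2⟩ | ⟨h1, h2⟩ <;>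
        rcases hstruct d hd e hed with ⟨h3, h4⟩ | ⟨h3, h4⟩
      · exact Finset.disjoint_left.mp hCd h1 h3
      · exact hdS _ h3 h2
      · exact hdS _ h3 h2
      · exact Finset.disjoint_left.mp hCd h1 h3
    have hlow : r * 𝒞.card ≤ (𝒞.biUnion (edgeBoundary fst snd)).card := by
      rw [Finset.card_biUnion hdisj]
      calc r * 𝒞.card = ∑ _c ∈ 𝒞, r := by rw [Finset.sum_const, smul_eq_mul, mul_comm]
        _ ≤ ∑ c ∈ 𝒞, (edgeBoundary fst snd c).card :=
            Finset.sum_le_sum (fun c hc => hG.2 c (Finset.mem_filter.mp hc).2)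
    have hup : (𝒞.biUnion (edgeBoundary fst snd)).card ≤ r * S.card := by
      have hsub : 𝒞.biUnion (edgeBoundary fst snd) ⊆
          (S.biUnion (fun v => univ.filter (fun e => fst e = v))) ∪
          (S.biUnion (fun v => univ.filter (fun e => snd e = v))) := by
        intro e he
        obtain ⟨c, hc, hec⟩ := Finset.mem_biUnion.mp he
        rcases hstruct c hc e hec with ⟨h1, h2⟩ | ⟨h1, h2⟩
        · exact Finset.mem_union_right _ (Finset.mem_biUnion.mpr
            ⟨snd e, h2, Finset.mem_filter.mpr ⟨Finset.mem_univ _, rfl⟩⟩)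
        · exact Finset.mem_union_left _ (Finset.mem_biUnion.mpr
            ⟨fst e, h2, Finset.mem_filter.mpr ⟨Finset.mem_univ _, rfl⟩⟩)
      calc (𝒞.biUnion (edgeBoundary fst snd)).card
          ≤ ((S.biUnion (fun v => univ.filter (fun e => fst e = v))) ∪
            (S.biUnion (fun v => univ.filter (fun e => snd e = v)))).card :=
            Finset.card_le_card hsub
        _ ≤ (S.biUnion (fun v => univ.filter (fun e => fst e = v))).card +
            (S.biUnion (fun v => univ.filter (fun e => snd e = v))).card :=
            Finset.card_union_le _ _
        _ ≤ (∑ v ∈ S, (univ.filter (fun e => fst e = v)).card) +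
            (∑ v ∈ S, (univ.filter (fun e => snd e = v)).card) :=
            add_le_add Finset.card_biUnion_le Finset.card_biUnion_le
        _ = ∑ v ∈ S, ((univ.filter (fun e => fst e = v)).card +
            (univ.filter (fun e => snd e = v)).card) := Finset.sum_add_distrib.symm
        _ = ∑ _v ∈ S, r := Finset.sum_congr rfl (fun v _ => hG.1 v)
        _ = r * S.card := by rw [Finset.sum_const, smul_eq_mul, mul_comm]
    have hfin : r * toc G B ≤ r * S.card := le_trans hlow hup
    exact Nat.le_of_mul_le_mul_left hfin (by omega)
  obtain ⟨m, hm⟩ := tutte_main hsymm (univ : Finset V).card univ le_rfl hcond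
  have hmG : ∀ v : V, G v (m v) := fun v => (hm v (Finset.mem_univ v)).2.1
  have hmm : ∀ v : V, m (m v) = v := fun v => (hm v (Finset.mem_univ v)).2.2
  have hpair : ∀ v : V, ∃ e : E, s(fst e, snd e) = s(v, m v) := fun v => (hmG v).2
  -- the set of matched pairs
  set P : Finset (Sym2 V) := univ.image (fun v : V => s(v, m v)) with hP
  have hexP : ∀ p ∈ P, ∃ e : E, s(fst e, snd e) = p := by
    intro p hp
    obtain ⟨v, -, rfl⟩ := Finset.mem_image.mp hp
    exact hpair v
  set g : {p // p ∈ P} → E := fun q => (hexP q.1 q.2).choose with hgdef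
  have hg : ∀ q, s(fst (g q), snd (g q)) = q.1 := fun q => (hexP q.1 q.2).choose_spec
  refine ⟨P.attach.image g, ?_⟩
  intro v
  have hpv : s(v, m v) ∈ P := Finset.mem_image_of_mem _ (Finset.mem_univ v)
  rw [Finset.card_eq_one]
  refine ⟨g ⟨s(v, m v), hpv⟩, ?_⟩
  ext e
  simp only [Finset.mem_filter, Finset.mem_singleton]
  constructor
  · rintro ⟨heM, hend⟩
    obtain ⟨q, -, rfl⟩ := Finset.mem_image.mp heM
    obtain ⟨w, -, hw⟩ := Finset.mem_image.mp q.2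
    have hgq : s(fst (g q), snd (g q)) = s(w, m w) := (hg q).trans hw.symm
    have hq1 : q.1 = s(v, m v) := by
      rw [← hw]
      rcases Sym2.eq_iff.mp hgq with ⟨ha, hb⟩ | ⟨ha, hb⟩ <;> rcases hend with hv | hv
      · rw [ha] at hv
        rw [hv]
      · rw [hb] at hv
        rw [← hv, hmm w, Sym2.eq_swap, hv]
      · rw [ha] at hv
        rw [← hv, hmm w, Sym2.eq_swap, hv]
      · rw [hb] at hv
        rw [hv]
    have : q = ⟨s(v, m v), hpv⟩ := Subtype.ext hq1
    rw [this]
  · rintro rfl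
    refine ⟨Finset.mem_image_of_mem g (Finset.mem_attach _ _), ?_⟩
    have h := hg ⟨s(v, m v), hpv⟩
    rcases Sym2.eq_iff.mp h with ⟨h1, -⟩ | ⟨-, h2⟩
    · exact Or.inl h1
    · exact Or.inr h2
end

section
/- Let r ≥ 4 be even and define a_k = ((r²−3r+1)k − (r²−5r+3))/((r²−2r−1)k − (r²−4r−1)) and b_k = ((r−2)k − (r−4))/((r²−2r−1)k − (r²−4r−1)). If a sequence (u_k) of reals in [0,1] satisfies u₁ ≥ 1/r and u_k ≥ a_k·u_{k−1} + b_k for k ≥ 2, then u_k ≥ 1 − ∏_{i=1}^{k} a_i for all k ≥ 1. -/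
open Finset Filter Topology

theorem recurrence_lower_bound (r : ℕ) (hre : Even r) (hr : 4 ≤ r) (u : ℕ → ℝ)
    (hu : ∀ k, 0 ≤ u k ∧ u k ≤ 1) (h1 : 1 / (r : ℝ) ≤ u 1)
    (hrec : ∀ k, 2 ≤ k →
      (((r : ℝ) ^ 2 - 3 * r + 1) * k - ((r : ℝ) ^ 2 - 5 * r + 3))
          / (((r : ℝ) ^ 2 - 2 * r - 1) * k - ((r : ℝ) ^ 2 - 4 * r - 1)) * u (k - 1)
        + (((r : ℝ) - 2) * k - ((r : ℝ) - 4))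
          / (((r : ℝ) ^ 2 - 2 * r - 1) * k - ((r : ℝ) ^ 2 - 4 * r - 1)) ≤ u k) :
    ∀ k, 1 ≤ k →
      1 - ∏ i ∈ (Finset.Icc 1 k : Finset ℕ),
          (((r : ℝ) ^ 2 - 3 * r + 1) * (i : ℝ) - ((r : ℝ) ^ 2 - 5 * r + 3))
            / (((r : ℝ) ^ 2 - 2 * r - 1) * (i : ℝ) - ((r : ℝ) ^ 2 - 4 * r - 1)) ≤ u k := by
  have hx : (4:ℝ) ≤ (r:ℝ) := by exact_mod_cast hr
  set x : ℝ := (r:ℝ) with hxdef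
  have hx0 : x ≠ 0 := by nlinarith
  -- positivity of numerator/denominator for k ≥ 2
  have hN : ∀ k : ℕ, 2 ≤ k → 0 < (x ^ 2 - 3 * x + 1) * (k:ℝ) - (x ^ 2 - 5 * x + 3) := by
    intro k hk
    have hk' : (2:ℝ) ≤ (k:ℝ) := by exact_mod_cast hk
    nlinarith [mul_nonneg (by nlinarith : (0:ℝ) ≤ x^2-3*x+1) (by linarith : (0:ℝ) ≤ (k:ℝ)-2)]
  have hD : ∀ k : ℕ, 2 ≤ k → 0 < (x ^ 2 - 2 * x - 1) * (k:ℝ) - (x ^ 2 - 4 * x - 1) := by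
    intro k hk
    have hk' : (2:ℝ) ≤ (k:ℝ) := by exact_mod_cast hk
    nlinarith [mul_nonneg (by nlinarith : (0:ℝ) ≤ x^2-2*x-1) (by linarith : (0:ℝ) ≤ (k:ℝ)-2)]
  intro k hk
  induction k with
  | zero => omega
  | succ n ih =>
    rcases Nat.lt_or_ge n 1 with hn | hn
    · -- n = 0, base case k = 1
      interval_cases n
      simp only [Finset.Icc_self, Finset.prod_singleton, Nat.cast_one]
      have hb1 : ((x ^ 2 - 3 * x + 1) * (1:ℝ) - (x ^ 2 - 5 * x + 3))
          / ((x ^ 2 - 2 * x - 1) * (1:ℝ) - (x ^ 2 - 4 * x - 1)) = 1 - 1 / x := by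
        rw [show (x ^ 2 - 2 * x - 1) * (1:ℝ) - (x ^ 2 - 4 * x - 1) = 2 * x by ring]
        field_simp
        ring
      rw [hb1]
      linarith
    · have ihn := ih hn
      have h2 : 2 ≤ n + 1 := by omega
      have hrec' := hrec (n + 1) h2
      have hNn := hN (n + 1) h2
      have hDn := hD (n + 1) h2
      set a : ℝ := (x ^ 2 - 3 * x + 1) * ((n+1:ℕ):ℝ) - (x ^ 2 - 5 * x + 3) with ha
      set d : ℝ := (x ^ 2 - 2 * x - 1) * ((n+1:ℕ):ℝ) - (x ^ 2 - 4 * x - 1) with hd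
      have hb : ((x - 2) * ((n+1:ℕ):ℝ) - (x - 4)) / d = 1 - a / d := by
        rw [eq_sub_iff_add_eq, ← add_div, div_eq_one_iff_eq hDn.ne']
        push_cast [ha, hd]
        ring
      rw [Finset.prod_Icc_succ_top (by omega : 1 ≤ n + 1)]
      have hsimp : u (n + 1 - 1) = u n := by norm_num
      rw [hb, hsimp] at hrec'
      set P : ℝ := ∏ i ∈ Finset.Icc 1 n,
          ((x ^ 2 - 3 * x + 1) * (i : ℝ) - (x ^ 2 - 5 * x + 3))
            / ((x ^ 2 - 2 * x - 1) * (i : ℝ) - (x ^ 2 - 4 * x - 1)) with hP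
      have hanonneg : 0 ≤ a / d := le_of_lt (div_pos hNn hDn)
      have h1P : 1 - u n ≤ P := by linarith
      have := mul_le_mul_of_nonneg_left h1P hanonneg
      nlinarith [this, hrec']
end

section
/- Suppose every r-graph has 2r perfect matchings such that each edge is contained in exactly two of them (the generalized Berge–Fulkerson conjecture). Then for every r ≥ 3 and every 1 ≤ k ≤ 2r−1, every r-graph G has k perfect matchings M₁,…,M_k with |⋃ᵢ Mᵢ|/|E(G)| ≥ 1 − ∏_{i=1}^k (2r−1−i)/(2r+1−i). -/
open Finset Filter Topology

lemma prod_ratio (n k : ℕ) (h2 : 2 ≤ n) (hk : k ≤ n) :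
    ∏ i ∈ Finset.Icc 1 k, ((n : ℝ) - 1 - i) / ((n : ℝ) + 1 - i)
      = ((n - 2).choose k : ℝ) / (n.choose k) := by
  induction k with
  | zero => simp
  | succ k ih =>
    have hk' : k ≤ n := by omega
    rw [Finset.prod_Icc_succ_top (by omega : 1 ≤ k + 1), ih hk']
    rcases Nat.lt_or_ge k (n - 1) with h | h
    · -- k + 2 ≤ n
      have hk2 : k + 2 ≤ n := by omega
      have hCnk : (0 : ℝ) < (n.choose k : ℝ) := by
        exact_mod_cast Nat.choose_pos hk'
      have hCnk1 : (0 : ℝ) < (n.choose (k + 1) : ℝ) := by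
        exact_mod_cast Nat.choose_pos hk
      have hnk : (0 : ℝ) < (n : ℝ) - k := by
        have : (k : ℝ) < (n : ℝ) := by exact_mod_cast (by omega : k < n)
        linarith
      have hc1 : ((n.choose (k + 1)) : ℝ) * ((k : ℝ) + 1)
          = (n.choose k : ℝ) * ((n : ℝ) - k) := by
        have h := Nat.choose_succ_right_eq n k
        have := congrArg (Nat.cast : ℕ → ℝ) h
        push_cast [Nat.cast_sub hk'] at this
        linarith [this]
      have hc2 : (((n - 2).choose (k + 1)) : ℝ) * ((k : ℝ) + 1)
          = ((n - 2).choose k : ℝ) * ((n : ℝ) - 2 - k) := by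
        have h := Nat.choose_succ_right_eq (n - 2) k
        have := congrArg (Nat.cast : ℕ → ℝ) h
        have hsub : n - 2 - k = n - (k + 2) := by omega
        rw [hsub] at this
        push_cast [Nat.cast_sub hk2, Nat.cast_sub h2] at this
        linarith [this]
      have hden : ((n.choose k : ℝ)) * ((n : ℝ) + 1 - ((k + 1 : ℕ) : ℝ)) ≠ 0 := by
        push_cast
        nlinarith [hCnk, hnk]
      rw [div_mul_div_comm, div_eq_div_iff hden hCnk1.ne']
      push_cast
      linear_combination (((n - 2).choose (k + 1) : ℝ)) * hc1 - ((n.choose (k + 1) : ℝ)) * hc2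
    · -- k = n - 1
      have hkeq : k = n - 1 := by omega
      have h1 : (n - 2).choose k = 0 := Nat.choose_eq_zero_of_lt (by omega)
      have h2' : (n - 2).choose (k + 1) = 0 := Nat.choose_eq_zero_of_lt (by omega)
      simp [h1, h2']

/-- If the generalized Berge-Fulkerson conjecture holds, then every `r`-graph (`r ≥ 3`)
has `k` perfect matchings (`1 ≤ k ≤ 2r-1`) covering at least a
`1 - ∏_{i=1}^k (2r-1-i)/(2r+1-i)` fraction of the edges. -/
theorem observation_from_GBF
    (GBF : ∀ (r : ℕ) (V E : Type) [Fintype V] [Fintype E] [DecidableEq V] [DecidableEq E]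
      (fst snd : E → V), IsRGraph fst snd r →
      ∃ F : Fin (2 * r) → Finset E, (∀ i, IsPerfectMatching fst snd (F i)) ∧
        ∀ e : E, (univ.filter (fun i => e ∈ F i)).card = 2) :
    ∀ (r k : ℕ), 3 ≤ r → 1 ≤ k → k ≤ 2 * r - 1 →
    ∀ (V E : Type) [Fintype V] [Fintype E] [DecidableEq V] [DecidableEq E]
      (fst snd : E → V), IsRGraph fst snd r →
      ∃ M : Fin k → Finset E, (∀ i, IsPerfectMatching fst snd (M i)) ∧
        (1 - ∏ i ∈ (Finset.Icc 1 k : Finset ℕ), (2 * (r : ℝ) - 1 - i) / (2 * (r : ℝ) + 1 - i))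
            * (Fintype.card E : ℝ) ≤ ((univ.biUnion M).card : ℝ) := by
  intro r k hr hk1 hk2 V E _ _ _ _ fst snd hG
  obtain ⟨F, hFpm, hF2⟩ := GBF r V E fst snd hG
  have hkn : k ≤ 2 * r := by omega
  set P : Finset (Finset (Fin (2 * r))) := powersetCard k univ with hP
  -- key : for each edge, the number of bad k-subsets is (2r-2).choose k
  have key : ∀ e : E, (P.filter (fun s => ∀ j ∈ s, e ∉ F j)).card = (2 * r - 2).choose k := by
    intro e
    have hA : (univ.filter (fun i => e ∉ F i)).card = 2 * r - 2 := by
      have h1 := Finset.card_filter_add_card_filter_not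
        (s := (univ : Finset (Fin (2 * r)))) (p := fun i => e ∈ F i)
      have h2 := hF2 e
      simp only [Finset.card_univ, Fintype.card_fin] at h1
      omega
    have heq : P.filter (fun s => ∀ j ∈ s, e ∉ F j)
        = powersetCard k (univ.filter (fun i => e ∉ F i)) := by
      ext s
      simp only [hP, Finset.mem_filter, Finset.mem_powersetCard, Finset.subset_iff,
        Finset.mem_univ, true_and]
      tauto
    rw [heq, Finset.card_powersetCard, hA]
  -- total sum
  have hsum : ∑ s ∈ P, (univ.filter (fun e : E => ∀ j ∈ s, e ∉ F j)).card
      = Fintype.card E * (2 * r - 2).choose k := by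
    calc ∑ s ∈ P, (univ.filter (fun e : E => ∀ j ∈ s, e ∉ F j)).card
        = ∑ s ∈ P, ∑ e : E, (if ∀ j ∈ s, e ∉ F j then 1 else 0) := by
          refine Finset.sum_congr rfl fun s _ => ?_
          rw [Finset.card_filter]
      _ = ∑ e : E, ∑ s ∈ P, (if ∀ j ∈ s, e ∉ F j then 1 else 0) := Finset.sum_comm
      _ = ∑ e : E, (P.filter (fun s => ∀ j ∈ s, e ∉ F j)).card := by
          refine Finset.sum_congr rfl fun e _ => ?_
          rw [Finset.card_filter]
      _ = ∑ e : E, (2 * r - 2).choose k := Finset.sum_congr rfl fun e _ => key e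
      _ = Fintype.card E * (2 * r - 2).choose k := by
          rw [Finset.sum_const, Finset.card_univ, smul_eq_mul]
  have hPne : P.Nonempty := by
    rw [hP, Finset.powersetCard_nonempty]
    simpa using hkn
  have hPcard : P.card = (2 * r).choose k := by
    rw [hP, Finset.card_powersetCard, Finset.card_univ, Fintype.card_fin]
  -- pigeonhole
  obtain ⟨s, hsP, hsle⟩ := Finset.exists_le_of_sum_le (f := fun s =>
      (2 * r).choose k * (univ.filter (fun e : E => ∀ j ∈ s, e ∉ F j)).card)
    (g := fun _ => Fintype.card E * (2 * r - 2).choose k) hPne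
    (by rw [← Finset.mul_sum, hsum, Finset.sum_const, hPcard, smul_eq_mul])
  have hscard : s.card = k := (Finset.mem_powersetCard.1 hsP).2
  -- construct the matchings
  refine ⟨fun i => F (s.equivFin.symm (Fin.cast hscard.symm i) : {x // x ∈ s}),
    fun i => hFpm _, ?_⟩
  set M : Fin k → Finset E := fun i => F (s.equivFin.symm (Fin.cast hscard.symm i) : {x // x ∈ s})
  have hUnion : univ.biUnion M = univ.filter (fun e : E => ¬ ∀ j ∈ s, e ∉ F j) := by
    ext e
    simp only [Finset.mem_biUnion, Finset.mem_univ, true_and, Finset.mem_filter, M]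
    constructor
    · rintro ⟨i, hi⟩
      push_neg
      exact ⟨_, (s.equivFin.symm (Fin.cast hscard.symm i)).2, hi⟩
    · intro h
      push_neg at h
      obtain ⟨j, hj, hej⟩ := h
      refine ⟨Fin.cast hscard (s.equivFin ⟨j, hj⟩), ?_⟩
      simp [hej]
  have hpart := Finset.card_filter_add_card_filter_not
    (s := (univ : Finset E)) (p := fun e => ∀ j ∈ s, e ∉ F j)
  rw [Finset.card_univ] at hpart
  -- now the real arithmetic
  have hprod : ∏ i ∈ (Finset.Icc 1 k : Finset ℕ), (2 * (r : ℝ) - 1 - i) / (2 * (r : ℝ) + 1 - i)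
      = ((2 * r - 2).choose k : ℝ) / ((2 * r).choose k) := by
    have := prod_ratio (2 * r) k (by omega) hkn
    rw [← this]
    refine Finset.prod_congr rfl fun i _ => ?_
    push_cast
    ring_nf
  rw [hprod, hUnion]
  set U := (univ.filter (fun e : E => ∀ j ∈ s, e ∉ F j)).card with hU
  set C := (univ.filter (fun e : E => ¬ ∀ j ∈ s, e ∉ F j)).card with hC
  have hN : (0 : ℝ) < ((2 * r).choose k : ℝ) := by exact_mod_cast Nat.choose_pos hkn
  have h1 : ((2 * r).choose k : ℝ) * U ≤ (Fintype.card E : ℝ) * ((2 * r - 2).choose k : ℝ) := by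
    exact_mod_cast hsle
  have h2 : (C : ℝ) = (Fintype.card E : ℝ) - U := by
    have : (U : ℝ) + C = Fintype.card E := by exact_mod_cast hpart
    linarith
  have h3 : (U : ℝ) ≤ ((2 * r - 2).choose k : ℝ) * (Fintype.card E : ℝ) / ((2 * r).choose k : ℝ) := by
    rw [le_div_iff₀ hN]
    nlinarith [h1]
  have hexpand : (1 - ((2 * r - 2).choose k : ℝ) / ((2 * r).choose k : ℝ)) * (Fintype.card E : ℝ)
      = (Fintype.card E : ℝ) - ((2 * r - 2).choose k : ℝ) * (Fintype.card E : ℝ) / ((2 * r).choose k : ℝ) := by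
    ring
  rw [hexpand, h2]
  linarith
end
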